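/- Let k be a field of characteristic 2 and let A ∈ GL(2,k). The map Inn_A is a k-involution of SL(2,k) (that is, Inn_A ∘ Inn_A is the identity on SL(2,k) but Inn_A is not the identity on SL(2,k)) if and only if there exist a nonzero p ∈ k and C ∈ GL(2,k) such that C·A·C⁻¹ = L_p, where L_p is the 2×2 matrix with rows (0,1) and (p,0). -/

import Mathlib

set_option maxHeartbeats 3200000 in
theorem stmt_2 {k : Type*} [Field k] [CharP k 2] (A : (Matrix (Fin 2) (Fin 2) k)ˣ) :
    ((∀ X : Matrix (Fin 2) (Fin 2) k, X.det = 1 →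
        (A : Matrix (Fin 2) (Fin 2) k) *
          ((A : Matrix (Fin 2) (Fin 2) k) * X * (↑A⁻¹ : Matrix (Fin 2) (Fin 2) k)) *
          (↑A⁻¹ : Matrix (Fin 2) (Fin 2) k) = X) ∧
      ¬ (∀ X : Matrix (Fin 2) (Fin 2) k, X.det = 1 →
        (A : Matrix (Fin 2) (Fin 2) k) * X * (↑A⁻¹ : Matrix (Fin 2) (Fin 2) k) = X)) ↔
    ∃ p : k, p ≠ 0 ∧ ∃ C : (Matrix (Fin 2) (Fin 2) k)ˣ,
      (C : Matrix (Fin 2) (Fin 2) k) * (A : Matrix (Fin 2) (Fin 2) k) *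
        (↑C⁻¹ : Matrix (Fin 2) (Fin 2) k) = !![0, 1; p, 0] := by
  have h2 : (2 : k) = 0 := CharTwo.two_eq_zero
  set M := (A : Matrix (Fin 2) (Fin 2) k) with hMdef
  set N := (↑A⁻¹ : Matrix (Fin 2) (Fin 2) k) with hNdef
  have hMN : M * N = 1 := A.mul_inv
  have hNM : N * M = 1 := A.inv_mul
  constructor
  · rintro ⟨h1, hni⟩
    have key : ∀ X : Matrix (Fin 2) (Fin 2) k, X.det = 1 → M * M * X = X * (M * M) := by
      intro X hX
      have e := h1 X hX
      have hN2M2 : N * (N * (M * M)) = 1 := by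
        rw [← mul_assoc N M, hNM, one_mul, hNM]
      calc M * M * X = M * (M * (X * (N * (N * (M * M))))) := by rw [hN2M2, mul_one, mul_assoc]
        _ = (M * (M * X * N) * N) * (M * M) := by simp only [mul_assoc]
        _ = X * (M * M) := by rw [e]
    obtain ⟨a, b, c, d, hMeta⟩ : ∃ a b c d, M = !![a, b; c, d] :=
      ⟨_, _, _, _, Matrix.eta_fin_two M⟩
    have hS : M * M = !![a*a+b*c, a*b+b*d; c*a+d*c, c*b+d*d] := by
      rw [hMeta, Matrix.mul_fin_two]
    have hE1 := key !![1,1;0,1] (by simp [Matrix.det_fin_two_of])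
    have hE2 := key !![1,0;1,1] (by simp [Matrix.det_fin_two_of])
    rw [hS, Matrix.mul_fin_two, Matrix.mul_fin_two] at hE1 hE2
    have e01 := congrFun (congrFun hE1 0) 1
    have f00 := congrFun (congrFun hE2 0) 0
    have e00 := congrFun (congrFun hE1 0) 0
    simp at e01 f00 e00
    have had : d = a := by
      have hsq : (a + d) * (a + d) = 0 := by
        linear_combination e01 + (a*d + d*d) * h2
      have h0 := mul_self_eq_zero.mp hsq
      linear_combination h0 - a * h2
    have hdet : M.det ≠ 0 := by
      have hu := A.isUnit
      rw [Matrix.isUnit_iff_isUnit_det] at hu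
      exact hu.ne_zero
    have hpdet : a * a + b * c = M.det := by
      rw [hMeta, Matrix.det_fin_two_of]
      linear_combination (-a) * had + (b*c) * h2
    have hp : a * a + b * c ≠ 0 := by rw [hpdet]; exact hdet
    have hbc : b ≠ 0 ∨ c ≠ 0 := by
      by_contra hcon
      push_neg at hcon
      apply hni
      intro X _
      have hMa : M = a • (1 : Matrix (Fin 2) (Fin 2) k) := by
        rw [hMeta, hcon.1, hcon.2, had]
        ext i j
        fin_cases i <;> fin_cases j <;> simp [Matrix.one_apply]
      have haN : a • N = 1 := by rw [← one_mul N, ← smul_mul_assoc, ← hMa, hMN]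
      calc M * X * N = (a • (1 : Matrix (Fin 2) (Fin 2) k)) * X * N := by rw [← hMa]
        _ = X * (a • N) := by
            rw [smul_mul_assoc, one_mul, smul_mul_assoc, mul_smul_comm]
        _ = X := by rw [haN, mul_one]
    have hp2 : a ^ 2 + b * c ≠ 0 := by rwa [sq]
    have hp3 : a ^ 2 + c * b ≠ 0 := by rwa [sq, mul_comm c b]
    refine ⟨a * a + b * c, hp, ?_⟩
    by_cases hc0 : c = 0
    · have hb0 : b ≠ 0 := by
        rcases hbc with h | h
        · exact h
        · exact absurd hc0 h
      refine ⟨Units.mk !![a/b, 1; (a*a+b*c)/b, 0] !![0, b/(a*a+b*c); 1, a/(a*a+b*c)]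
        ?_ ?_, ?_⟩
      · ext i j
        fin_cases i <;> fin_cases j <;>
          simp [Matrix.mul_apply, Fin.sum_univ_two, Matrix.one_apply] <;>
          (try field_simp) <;> (try ring_nf) <;> (try simp [h2])
      · ext i j
        fin_cases i <;> fin_cases j <;>
          simp [Matrix.mul_apply, Fin.sum_univ_two, Matrix.one_apply] <;>
          (try field_simp) <;> (try ring_nf) <;> (try simp [h2])
      · show !![a/b, 1; (a*a+b*c)/b, 0] * M * !![0, b/(a*a+b*c); 1, a/(a*a+b*c)] = _
        have ha0 : a ≠ 0 := by
          intro h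
          apply hp
          rw [h, hc0]
          ring
        rw [hMeta, had, hc0]
        ext i j
        fin_cases i <;> fin_cases j <;>
          simp [Matrix.mul_apply, Fin.sum_univ_two] <;>
          (try field_simp) <;> (try ring_nf) <;> (try simp [h2]) <;>
          (try linear_combination h2)
    · refine ⟨Units.mk !![1, a/c; 0, (a*a+b*c)/c] !![1, a/(a*a+b*c); 0, c/(a*a+b*c)]
        ?_ ?_, ?_⟩
      · ext i j
        fin_cases i <;> fin_cases j <;>
          simp [Matrix.mul_apply, Fin.sum_univ_two, Matrix.one_apply] <;>
          (try field_simp) <;> (try ring_nf) <;> (try simp [h2])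
      · ext i j
        fin_cases i <;> fin_cases j <;>
          simp [Matrix.mul_apply, Fin.sum_univ_two, Matrix.one_apply] <;>
          (try field_simp) <;> (try ring_nf) <;> (try simp [h2]) <;>
          (try linear_combination a^2 * h2)
      · show !![1, a/c; 0, (a*a+b*c)/c] * M * !![1, a/(a*a+b*c); 0, c/(a*a+b*c)] = _
        rw [hMeta, had]
        ext i j
        fin_cases i <;> fin_cases j <;>
          simp [Matrix.mul_apply, Fin.sum_univ_two] <;>
          (try field_simp) <;> (try ring_nf) <;> (try simp [h2]) <;>
          (try linear_combination a^2 * h2)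
  · rintro ⟨p, hp, C, hC⟩
    set Cv := (↑C : Matrix (Fin 2) (Fin 2) k) with hCvdef
    set Ci := (↑C⁻¹ : Matrix (Fin 2) (Fin 2) k) with hCidef
    have hCCi : Cv * Ci = 1 := C.mul_inv
    have hCiC : Ci * Cv = 1 := C.inv_mul
    have hCm : ∀ x : Matrix (Fin 2) (Fin 2) k, Cv * (Ci * x) = x :=
      fun x => by rw [← mul_assoc, hCCi, one_mul]
    have hCm' : ∀ x : Matrix (Fin 2) (Fin 2) k, Ci * (Cv * x) = x :=
      fun x => by rw [← mul_assoc, hCiC, one_mul]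
    have hA : M = Ci * !![0,1;p,0] * Cv := by
      conv_rhs => rw [← hC]
      simp only [mul_assoc, hCiC, hCCi, mul_one, hCm, hCm']
    have hLL : (!![0,1;p,0] : Matrix (Fin 2) (Fin 2) k) * !![0,1;p,0] = p • 1 := by
      rw [Matrix.mul_fin_two]
      ext i j
      fin_cases i <;> fin_cases j <;> simp [Matrix.one_apply]
    have hM2 : M * M = p • (1 : Matrix (Fin 2) (Fin 2) k) := by
      rw [hA]
      calc (Ci * !![0,1;p,0] * Cv) * (Ci * !![0,1;p,0] * Cv)
          = Ci * (!![0,1;p,0] * !![0,1;p,0]) * Cv := by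
            simp only [mul_assoc, hCm]
        _ = Ci * (p • 1) * Cv := by rw [hLL]
        _ = p • (Ci * Cv) := by rw [mul_smul_comm, mul_one, smul_mul_assoc]
        _ = p • (1 : Matrix (Fin 2) (Fin 2) k) := by rw [hCiC]
    have hN2 : N * N = p⁻¹ • (1 : Matrix (Fin 2) (Fin 2) k) := by
      have h1 : N * (N * (M * M)) = 1 := by rw [← mul_assoc N M, hNM, one_mul, hNM]
      rw [hM2, mul_smul_comm, mul_smul_comm, mul_one] at h1
      calc N * N = p⁻¹ • (p • (N * N)) := by rw [smul_smul, inv_mul_cancel₀ hp, one_smul]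
        _ = p⁻¹ • (1 : Matrix (Fin 2) (Fin 2) k) := by rw [h1]
    constructor
    · intro X _
      calc M * (M * X * N) * N = (M * M) * X * (N * N) := by simp only [mul_assoc]
        _ = (p • 1) * X * (p⁻¹ • 1) := by rw [hM2, hN2]
        _ = (p⁻¹ * p) • X := by
            simp only [smul_mul_assoc, mul_smul_comm, one_mul, mul_one, smul_smul]
        _ = X := by rw [inv_mul_cancel₀ hp, one_smul]
    · intro hall
      have hdetCC : Ci.det * Cv.det = 1 := by
        rw [← Matrix.det_mul, hCiC, Matrix.det_one]
      have hdetX : (Ci * !![1,1;0,1] * Cv).det = 1 := by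
        rw [Matrix.det_mul, Matrix.det_mul]
        have : (!![1,1;0,1] : Matrix (Fin 2) (Fin 2) k).det = 1 := by
          simp [Matrix.det_fin_two_of]
        rw [this, mul_one, hdetCC]
      have hcomm := hall _ hdetX
      have hcomm2 : M * (Ci * !![1,1;0,1] * Cv) = (Ci * !![1,1;0,1] * Cv) * M := by
        conv_rhs => rw [← hcomm]
        simp only [mul_assoc, hNM, mul_one]
      have hLE : (!![0,1;p,0] : Matrix (Fin 2) (Fin 2) k) * !![1,1;0,1]
          = !![1,1;0,1] * (!![0,1;p,0] : Matrix (Fin 2) (Fin 2) k) := by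
        calc (!![0,1;p,0] : Matrix (Fin 2) (Fin 2) k) * !![1,1;0,1]
            = (Cv * M * Ci) * !![1,1;0,1] * (Cv * Ci) := by rw [hC, hCCi, mul_one]
          _ = Cv * (M * (Ci * !![1,1;0,1] * Cv)) * Ci := by simp only [mul_assoc]
          _ = Cv * ((Ci * !![1,1;0,1] * Cv) * M) * Ci := by rw [hcomm2]
          _ = (Cv * Ci) * !![1,1;0,1] * (Cv * M * Ci) := by simp only [mul_assoc]
          _ = !![1,1;0,1] * (!![0,1;p,0] : Matrix (Fin 2) (Fin 2) k) := by
              rw [hC, hCCi, one_mul]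
      have hee := congrFun (congrFun hLE 0) 0
      simp [Matrix.mul_apply, Fin.sum_univ_two] at hee
      exact hp hee.symm
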